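/- arXiv:1902.03648 — 4 statements merged into one kernel-verified Lean document; each statement's English description precedes it below -/
import Mathlib

section
/- Let n_1 ≤ … ≤ n_k be positive integers, m a positive integer, and ℓ = m(n_1+…+n_k). Then the almost multipartite graph G^m_{ℓ,k} contains an induced subgraph isomorphic to mK_{n_1,…,n_k}, the disjoint union of m copies of the complete multipartite graph K_{n_1,…,n_k}. -/
/-- Disjoint union of `m` copies of a graph `A`. -/
def manyCopies {α : Type*} (m : ℕ) (A : SimpleGraph α) : SimpleGraph (Fin m × α) where
  Adj p q := p.1 = q.1 ∧ A.Adj p.2 q.2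
  symm := by constructor; intro p q h; exact ⟨h.1.symm, h.2.symm⟩
  loopless := by constructor; intro p h; exact A.loopless.irrefl _ h.2

/-- The almost multipartite graph `G^m_{ℓ,k}`, on triples `(i, j, h)` where `i` is the
class, `j` the dole and `h` the part: two vertices are adjacent iff they are in the same
part with different classes and doles, or have the same class and different parts. -/
def almostMultipartite (ℓ k m : ℕ) : SimpleGraph (Fin ℓ × Fin k × Fin m) where
  Adj p q := (p.2.2 = q.2.2 ∧ p.1 ≠ q.1 ∧ p.2.1 ≠ q.2.1) ∨ (p.1 = q.1 ∧ p.2.2 ≠ q.2.2)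
  symm := by
    constructor
    rintro p q (⟨h1, h2, h3⟩ | ⟨h1, h2⟩)
    · exact Or.inl ⟨h1.symm, h2.symm, h3.symm⟩
    · exact Or.inr ⟨h1.symm, h2.symm⟩
  loopless := by constructor; rintro p (⟨_, h, _⟩ | ⟨_, h⟩) <;> exact h rfl

/-- `G^m_{ℓ,k}` contains an induced subgraph isomorphic to
`mK_{n₁,…,n_k}`, where `ℓ = m(n₁+…+n_k)`. -/
theorem almostMultipartite_contains (k m : ℕ) (hk : 0 < k) (hm : 0 < m)
    (n : Fin k → ℕ) (hpos : ∀ i, 0 < n i) (hmono : Monotone n) :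
    Nonempty ((manyCopies m (SimpleGraph.completeMultipartiteGraph fun i => Fin (n i))) ↪g
        almostMultipartite (m * ∑ i, n i) k m) := by
  classical
  have hcard : Fintype.card (Fin m × Σ i : Fin k, Fin (n i)) = m * ∑ i, n i := by
    simp
  obtain ⟨e⟩ : Nonempty ((Fin m × Σ i : Fin k, Fin (n i)) ≃ Fin (m * ∑ i, n i)) :=
    ⟨Fintype.equivOfCardEq (by simpa using hcard)⟩
  refine ⟨⟨⟨fun v => (e v, v.2.1, v.1), ?_⟩, ?_⟩⟩
  · intro v w h
    exact e.injective (congrArg Prod.fst h)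
  · intro v w
    constructor
    · rintro (⟨h1, h2, h3⟩ | ⟨h1, h2⟩)
      · exact ⟨h1, h3⟩
      · exact absurd (congrArg Prod.fst (e.injective h1)) h2
    · rintro ⟨hc, ht⟩
      refine Or.inl ⟨hc, fun h => ?_, ht⟩
      obtain rfl := e.injective h
      exact ht rfl
end

section
/- Let n_1 ≤ … ≤ n_k be positive integers with k ≥ 2 and n_k > 1, let m ≥ 1, and let ℓ = m(n_1+…+n_k). Then the almost multipartite graph G^m_{ℓ−1,k} does not contain an induced subgraph isomorphic to mK_{n_1,…,n_k}. -/
theorem abs_main (k m L : ℕ) (hk : 2 ≤ k) (n : Fin k → ℕ)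
    (hpos : ∀ i, 0 < n i) (hnk : 2 ≤ n ⟨k - 1, by omega⟩)
    (hL : L < m * ∑ i, n i)
    (A : (Fin m × Σ i : Fin k, Fin (n i)) → Fin L)
    (J : (Fin m × Σ i : Fin k, Fin (n i)) → Fin k)
    (H : (Fin m × Σ i : Fin k, Fin (n i)) → Fin m)
    (inj : ∀ u v, A u = A v → J u = J v → H u = H v → u = v)
    (adj : ∀ u v : Fin m × Σ i : Fin k, Fin (n i), u.1 = v.1 → u.2.1 ≠ v.2.1 →
      (H u = H v ∧ A u ≠ A v ∧ J u ≠ J v) ∨ (A u = A v ∧ H u ≠ H v))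
    (nonadjH : ∀ u v : Fin m × Σ i : Fin k, Fin (n i), u ≠ v →
      (u.1 ≠ v.1 ∨ u.2.1 = v.2.1) → H u = H v → A u = A v ∨ J u = J v)
    (nonadjA : ∀ u v : Fin m × Σ i : Fin k, Fin (n i), u ≠ v →
      (u.1 ≠ v.1 ∨ u.2.1 = v.2.1) → A u = A v → H u = H v) :
    False := by
  have hk0 : 0 < k := by omega
  -- derived adjacency facts
  have adjH : ∀ u v : Fin m × Σ i : Fin k, Fin (n i), u.1 = v.1 → u.2.1 ≠ v.2.1 →
      H u = H v → A u ≠ A v ∧ J u ≠ J v := by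
    intro u v h1 h2 h3
    rcases adj u v h1 h2 with ⟨_, h⟩ | ⟨_, h⟩
    · exact h
    · exact absurd h3 h
  have adjA : ∀ u v : Fin m × Σ i : Fin k, Fin (n i), u.1 = v.1 → u.2.1 ≠ v.2.1 →
      H u ≠ H v → A u = A v := by
    intro u v h1 h2 h3
    rcases adj u v h1 h2 with ⟨h, _⟩ | ⟨h, _⟩
    · exact absurd h h3
    · exact h
  have hme : ∀ u v : Fin m × Σ i : Fin k, Fin (n i), u.1 ≠ v.1 → u ≠ v := by
    intro u v h he; exact h (congrArg Prod.fst he)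
  have crossH : ∀ u v : Fin m × Σ i : Fin k, Fin (n i), u.1 ≠ v.1 → H u ≠ H v →
      A u ≠ A v := by
    intro u v h hH hA
    exact hH (nonadjA u v (hme u v h) (Or.inl h) hA)
  have crosscover : ∀ u v : Fin m × Σ i : Fin k, Fin (n i), u.1 ≠ v.1 → H u = H v →
      A u = A v ∨ J u = J v := by
    intro u v h hH
    exact nonadjH u v (hme u v h) (Or.inl h) hH
  have doleH : ∀ u v : Fin m × Σ i : Fin k, Fin (n i), u ≠ v → u.1 = v.1 →
      u.2.1 = v.2.1 → A u = A v → H u = H v := by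
    intro u v hne h1 h2 hA
    exact nonadjA u v hne (Or.inr h2) hA
  -- structure of "flat" copies (all vertices in one part)
  have flatlem : ∀ c : Fin m,
      (∀ u v : Fin m × Σ i : Fin k, Fin (n i), u.1 = c → v.1 = c → H u = H v) →
      (∀ u v : Fin m × Σ i : Fin k, Fin (n i), u.1 = c → v.1 = c → u.2.1 = v.2.1 → J u = J v) ∧
      (∀ u v : Fin m × Σ i : Fin k, Fin (n i), u.1 = c → v.1 = c → A u = A v → u = v) ∧
      (∀ jv : Fin k, ∃ i : Fin k, J ((c, ⟨i, ⟨0, hpos i⟩⟩) : Fin m × Σ i : Fin k, Fin (n i)) = jv) := by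
    intro c hflat
    set ψ : Fin k → Fin k := fun i => J ((c, ⟨i, ⟨0, hpos i⟩⟩) : Fin m × Σ i : Fin k, Fin (n i)) with hψ
    have hψinj : Function.Injective ψ := by
      intro i i' h
      by_contra hne
      exact (adjH (c, ⟨i, ⟨0, hpos i⟩⟩) (c, ⟨i', ⟨0, hpos i'⟩⟩) rfl hne (hflat _ _ rfl rfl)).2 h
    have hψsurj : Function.Surjective ψ := Finite.surjective_of_injective hψinj
    have hcol : ∀ u : Fin m × Σ i : Fin k, Fin (n i), u.1 = c → J u = ψ u.2.1 := by
      intro u hu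
      obtain ⟨i', hi'⟩ := hψsurj (J u)
      by_cases h : i' = u.2.1
      · rw [← hi', h]
      · exact absurd hi'.symm
          ((adjH u (c, ⟨i', ⟨0, hpos i'⟩⟩) hu (fun hh => h hh.symm) (hflat _ _ hu rfl)).2)
    refine ⟨?_, ?_, fun jv => hψsurj jv⟩
    · intro u v hu hv hd
      rw [hcol u hu, hcol v hv, hd]
    · intro u v hu hv hA
      by_cases hd : u.2.1 = v.2.1
      · exact inj u v hA (by rw [hcol u hu, hcol v hv, hd]) (hflat u v hu hv)
      · exact absurd hA (adjH u v (hu.trans hv.symm) hd (hflat u v hu hv)).1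
  -- every copy has a private part
  have priv : ∀ c : Fin m, ∃ η : Fin m,
      (∃ u : Fin m × Σ i : Fin k, Fin (n i), u.1 = c ∧ H u = η) ∧
      ∀ w : Fin m × Σ i : Fin k, Fin (n i), w.1 ≠ c → H w ≠ η := by
    intro c
    by_cases hflat : ∀ u v : Fin m × Σ i : Fin k, Fin (n i), u.1 = c → v.1 = c → H u = H v
    · obtain ⟨hJd, hAc, hJs⟩ := flatlem c hflat
      refine ⟨H ((c, ⟨⟨0, hk0⟩, ⟨0, hpos _⟩⟩) : Fin m × Σ i : Fin k, Fin (n i)),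
        ⟨_, rfl, rfl⟩, ?_⟩
      intro w hw hHw
      have hflatH : ∀ u : Fin m × Σ i : Fin k, Fin (n i), u.1 = c → H u = H w :=
        fun u hu => (hflat u _ hu rfl).trans hHw.symm
      have cover : ∀ u : Fin m × Σ i : Fin k, Fin (n i), u.1 = c → A u = A w ∨ J u = J w :=
        fun u hu => crosscover u w (by rw [hu]; exact Ne.symm hw) (hflatH u hu)
      obtain ⟨iw, hiw⟩ := hJs (J w)
      -- any vertex of copy c outside dole iw has A-value A w
      have hout : ∀ u : Fin m × Σ i : Fin k, Fin (n i), u.1 = c → u.2.1 ≠ iw → A u = A w := by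
        intro u hu hd
        rcases cover u hu with h | h
        · exact h
        · exact absurd (h.trans hiw.symm)
            (adjH u (c, ⟨iw, ⟨0, hpos iw⟩⟩) hu hd (hflat u _ hu rfl)).2
      have huniq : ∀ u v : Fin m × Σ i : Fin k, Fin (n i), u.1 = c → v.1 = c →
          u.2.1 ≠ iw → v.2.1 ≠ iw → u = v :=
        fun u v hu hv h1 h2 => hAc u v hu hv ((hout u hu h1).trans (hout v hv h2).symm)
      -- choose a dole i0 different from iw
      obtain ⟨i0, hi0⟩ : ∃ i0 : Fin k, i0 ≠ iw := by
        by_cases h : iw = ⟨0, hk0⟩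
        · exact ⟨⟨1, by omega⟩, by rw [h]; simp [Fin.ext_iff]⟩
        · exact ⟨⟨0, hk0⟩, fun hh => h hh.symm⟩
      have hall : ∀ i : Fin k, i = iw ∨ i = i0 := by
        intro i
        by_contra hcon
        push_neg at hcon
        have := huniq (c, ⟨i, ⟨0, hpos i⟩⟩) (c, ⟨i0, ⟨0, hpos i0⟩⟩) rfl rfl hcon.1 hi0
        exact hcon.2 (congrArg (fun p : Fin m × Σ i : Fin k, Fin (n i) => p.2.1) this)
      have hni0 : n i0 = 1 := by
        by_contra h
        have h2 : 1 < n i0 := by have := hpos i0; omega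
        have := huniq (c, ⟨i0, ⟨0, hpos i0⟩⟩) (c, ⟨i0, ⟨1, h2⟩⟩) rfl rfl hi0 hi0
        simpa using congrArg (fun p : Fin m × Σ i : Fin k, Fin (n i) => (p.2.2 : ℕ)) this
      have hiwl : (⟨k - 1, by omega⟩ : Fin k) = iw := by
        rcases hall ⟨k - 1, by omega⟩ with h | h
        · exact h
        · rw [h, hni0] at hnk; omega
      have hn2 : 1 < n iw := by rw [← hiwl]; exact hnk
      -- key vertices
      have hAs : A ((c, ⟨i0, ⟨0, hpos i0⟩⟩) : Fin m × Σ i : Fin k, Fin (n i)) = A w :=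
        hout _ rfl hi0
      have hJu1 : J ((c, ⟨iw, ⟨0, hpos iw⟩⟩) : Fin m × Σ i : Fin k, Fin (n i)) = J w := hiw
      have hJu2 : J ((c, ⟨iw, ⟨1, hn2⟩⟩) : Fin m × Σ i : Fin k, Fin (n i)) = J w :=
        (hJd (c, ⟨iw, ⟨1, hn2⟩⟩) (c, ⟨iw, ⟨0, hpos iw⟩⟩) rfl rfl rfl).trans hiw
      have hA12 : A ((c, ⟨iw, ⟨0, hpos iw⟩⟩) : Fin m × Σ i : Fin k, Fin (n i)) ≠
          A ((c, ⟨iw, ⟨1, hn2⟩⟩) : Fin m × Σ i : Fin k, Fin (n i)) := by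
        intro h
        simpa using congrArg (fun p : Fin m × Σ i : Fin k, Fin (n i) => (p.2.2 : ℕ))
          (hAc _ _ rfl rfl h)
      have hJsw : J ((c, ⟨i0, ⟨0, hpos i0⟩⟩) : Fin m × Σ i : Fin k, Fin (n i)) ≠ J w := by
        intro h
        exact (adjH (c, ⟨i0, ⟨0, hpos i0⟩⟩) (c, ⟨iw, ⟨0, hpos iw⟩⟩) rfl hi0
          (hflat _ _ rfl rfl)).2 (h.trans hiw.symm)
      -- all foreign vertices at this part coincide with w
      have solo : ∀ z : Fin m × Σ i : Fin k, Fin (n i), z.1 ≠ c → H z = H w → z = w := by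
        intro z hz hHz
        have c1 := crosscover (c, ⟨iw, ⟨0, hpos iw⟩⟩) z (by exact Ne.symm hz)
          ((hflatH _ rfl).trans hHz.symm)
        have c2 := crosscover (c, ⟨iw, ⟨1, hn2⟩⟩) z (by exact Ne.symm hz)
          ((hflatH _ rfl).trans hHz.symm)
        have hJz : J z = J w := by
          rcases c1 with h | h
          · rcases c2 with h' | h'
            · exact absurd (h.trans h'.symm) hA12
            · exact h'.symm.trans hJu2
          · exact h.symm.trans hJu1
        have hAz : A z = A w := by
          rcases crosscover (c, ⟨i0, ⟨0, hpos i0⟩⟩) z (by exact Ne.symm hz)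
            ((hflatH _ rfl).trans hHz.symm) with h | h
          · exact h.symm.trans hAs
          · exact absurd (h.trans hJz) hJsw
        exact inj z w hAz hJz hHz
      -- kill: pick a vertex of w's copy in another dole
      obtain ⟨i2, hi2⟩ : ∃ i2 : Fin k, i2 ≠ w.2.1 := by
        by_cases h : w.2.1 = ⟨0, hk0⟩
        · exact ⟨⟨1, by omega⟩, by rw [h]; simp [Fin.ext_iff]⟩
        · exact ⟨⟨0, hk0⟩, fun hh => h hh.symm⟩
      by_cases hy2 : H ((w.1, ⟨i2, ⟨0, hpos i2⟩⟩) : Fin m × Σ i : Fin k, Fin (n i)) = H w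
      · have := solo (w.1, ⟨i2, ⟨0, hpos i2⟩⟩) hw hy2
        exact hi2 (congrArg (fun p : Fin m × Σ i : Fin k, Fin (n i) => p.2.1) this)
      · have hAy2 : A ((w.1, ⟨i2, ⟨0, hpos i2⟩⟩) : Fin m × Σ i : Fin k, Fin (n i)) = A w :=
          adjA _ w rfl hi2 hy2
        exact crossH (w.1, ⟨i2, ⟨0, hpos i2⟩⟩) (c, ⟨i0, ⟨0, hpos i0⟩⟩) hw
          (fun h => hy2 (h.trans (hflatH _ rfl))) (hAy2.trans hAs.symm)
    by_cases hsd : ∀ u v : Fin m × Σ i : Fin k, Fin (n i), u.1 = c → v.1 = c →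
        H u = H v → u.2.1 = v.2.1
    · have hdiff : ∀ u v : Fin m × Σ i : Fin k, Fin (n i), u.1 = c → v.1 = c →
          u.2.1 ≠ v.2.1 → A u = A v := by
        intro u v hu hv hd
        exact adjA u v (hu.trans hv.symm) hd (fun h => hd (hsd u v hu hv h))
      have hil : (⟨0, hk0⟩ : Fin k) ≠ ⟨k - 1, by omega⟩ := by simp [Fin.ext_iff]; omega
      set u1 : Fin m × Σ i : Fin k, Fin (n i) := (c, ⟨⟨k - 1, by omega⟩, ⟨0, by omega⟩⟩) with hu1
      set u2 : Fin m × Σ i : Fin k, Fin (n i) := (c, ⟨⟨k - 1, by omega⟩, ⟨1, hnk⟩⟩) with hu2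
      set v0 : Fin m × Σ i : Fin k, Fin (n i) := (c, ⟨⟨0, hk0⟩, ⟨0, hpos _⟩⟩) with hv0
      have hA10 : A u1 = A v0 := hdiff u1 v0 rfl rfl (Ne.symm hil)
      have hA20 : A u2 = A v0 := hdiff u2 v0 rfl rfl (Ne.symm hil)
      have hA12 : A u1 = A u2 := hA10.trans hA20.symm
      have hne12 : u1 ≠ u2 := by
        intro h
        simpa using congrArg (fun p : Fin m × Σ i : Fin k, Fin (n i) => (p.2.2 : ℕ)) h
      have hH12 : H u1 = H u2 := doleH u1 u2 hne12 rfl rfl hA12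
      have hJ12 : J u1 ≠ J u2 := fun h => hne12 (inj u1 u2 hA12 h hH12)
      have hHv0 : H v0 ≠ H u1 := fun h => hil (hsd v0 u1 rfl rfl h)
      refine ⟨H u1, ⟨u1, rfl, rfl⟩, ?_⟩
      intro w hwc hHw
      have c1 := crosscover u1 w (Ne.symm hwc) hHw.symm
      have c2 := crosscover u2 w (Ne.symm hwc) (hH12.symm.trans hHw.symm)
      have hAw : A w = A u1 := by
        rcases c1 with h | h
        · exact h.symm
        · rcases c2 with h' | h'
          · exact h'.symm.trans hA12.symm
          · exact absurd (h.trans h'.symm) hJ12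
      exact crossH w v0 hwc (fun h => hHv0 (h.symm.trans hHw)) (hAw.trans hA10)
    · push_neg at hsd
      obtain ⟨x, y, hxc, hyc, hHxy, hdxy⟩ := hsd
      push_neg at hflat
      obtain ⟨px, qx, hpx, hqx, hpqx⟩ := hflat
      have hnflat : ∃ u v : Fin m × Σ i : Fin k, Fin (n i), u.1 = c ∧ v.1 = c ∧ H u ≠ H v :=
        ⟨px, qx, hpx, hqx, hpqx⟩
      clear hpqx
      -- an outside vertex
      obtain ⟨u0, hu0c, hu0H⟩ : ∃ u : Fin m × Σ i : Fin k, Fin (n i), u.1 = c ∧ H u ≠ H x := by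
        obtain ⟨p, q, hpc, hqc, hpq⟩ := hnflat
        by_cases h : H p = H x
        · exact ⟨q, hqc, fun hh => hpq (h.trans hh.symm)⟩
        · exact ⟨p, hpc, h⟩
      -- outside vertices lie in dole of x' or y' for any 2-dole pair at part H x
      have fact1 : ∀ x' y' : Fin m × Σ i : Fin k, Fin (n i), x'.1 = c → y'.1 = c →
          H x' = H x → H y' = H x → x'.2.1 ≠ y'.2.1 →
          ∀ u : Fin m × Σ i : Fin k, Fin (n i), u.1 = c → H u ≠ H x →
          u.2.1 = x'.2.1 ∨ u.2.1 = y'.2.1 := by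
        intro x' y' hx'c hy'c hHx' hHy' hd u huc hu
        by_contra hcon
        push_neg at hcon
        have h1 : A u = A x' := adjA u x' (huc.trans hx'c.symm) hcon.1 (fun h => hu (h.trans hHx'))
        have h2 : A u = A y' := adjA u y' (huc.trans hy'c.symm) hcon.2 (fun h => hu (h.trans hHy'))
        exact (adjH x' y' (hx'c.trans hy'c.symm) hd (hHx'.trans hHy'.symm)).1 (h1.symm.trans h2)
      have fx := fact1 x y hxc hyc rfl hHxy.symm hdxy
      -- the core argument, for a split dole X and a contained dole Y
      have core : ∀ X Y : Fin m × Σ i : Fin k, Fin (n i), X.1 = c → Y.1 = c →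
          H X = H Y → X.2.1 ≠ Y.2.1 →
          (∀ u : Fin m × Σ i : Fin k, Fin (n i), u.1 = c → H u ≠ H X → u.2.1 = X.2.1) →
          (∃ u0 : Fin m × Σ i : Fin k, Fin (n i), u0.1 = c ∧ H u0 ≠ H X) →
          ∃ η : Fin m, (∃ u : Fin m × Σ i : Fin k, Fin (n i), u.1 = c ∧ H u = η) ∧
            ∀ w : Fin m × Σ i : Fin k, Fin (n i), w.1 ≠ c → H w ≠ η := by
        intro X Y hXc hYc hHXY hdXY houts hout0
        obtain ⟨q1, hq1c, hq1H⟩ := hout0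
        have hq1d : q1.2.1 = X.2.1 := houts q1 hq1c hq1H
        -- A Y = A q1
        have hAY : A Y = A q1 := by
          refine adjA Y q1 (hYc.trans hq1c.symm) ?_ (fun h => hq1H (h.symm.trans hHXY.symm))
          rw [hq1d]; exact Ne.symm hdXY
        have hJXY : J X ≠ J Y := (adjH X Y (hXc.trans hYc.symm) hdXY hHXY).2
        refine ⟨H X, ⟨X, hXc, rfl⟩, ?_⟩
        intro w hwc hHw
        -- structure of any foreign vertex at part H X
        have forstruct : ∀ z : Fin m × Σ i : Fin k, Fin (n i), z.1 ≠ c → H z = H X →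
            A z = A X ∧ J z = J Y := by
          intro z hzc hzH
          have hzα : A z ≠ A q1 := crossH z q1 (fun h => hzc (h.trans hq1c))
            (fun h => hq1H (h.symm.trans hzH))
          have hJzY : J z = J Y := by
            rcases crosscover Y z (by rw [hYc]; exact Ne.symm hzc)
              (hHXY.symm.trans hzH.symm) with h | h
            · exact absurd (h.symm.trans hAY) hzα
            · exact h.symm
          have hAzX : A z = A X := by
            rcases crosscover X z (by rw [hXc]; exact Ne.symm hzc) hzH.symm with h | h
            · exact h.symm
            · exact absurd (h.trans hJzY) hJXY
          exact ⟨hAzX, hJzY⟩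
        obtain ⟨hAwX, hJwY⟩ := forstruct w hwc hHw
        -- kill
        obtain ⟨i2, hi2⟩ : ∃ i2 : Fin k, i2 ≠ w.2.1 := by
          by_cases h : w.2.1 = ⟨0, hk0⟩
          · exact ⟨⟨1, by omega⟩, by rw [h]; simp [Fin.ext_iff]⟩
          · exact ⟨⟨0, hk0⟩, fun hh => h hh.symm⟩
        by_cases hy2 : H ((w.1, ⟨i2, ⟨0, hpos i2⟩⟩) : Fin m × Σ i : Fin k, Fin (n i)) = H X
        · have hz := forstruct (w.1, ⟨i2, ⟨0, hpos i2⟩⟩) hwc hy2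
          have : ((w.1, ⟨i2, ⟨0, hpos i2⟩⟩) : Fin m × Σ i : Fin k, Fin (n i)) = w :=
            inj _ w (hz.1.trans hAwX.symm) (hz.2.trans hJwY.symm) (hy2.trans hHw.symm)
          exact hi2 (congrArg (fun p : Fin m × Σ i : Fin k, Fin (n i) => p.2.1) this)
        · have hAy2 : A ((w.1, ⟨i2, ⟨0, hpos i2⟩⟩) : Fin m × Σ i : Fin k, Fin (n i)) = A w :=
            adjA _ w rfl hi2 (fun h => hy2 (h.trans hHw))
          exact crossH (w.1, ⟨i2, ⟨0, hpos i2⟩⟩) X (by rw [hXc]; exact hwc)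
            (fun h => hy2 h) (hAy2.trans hAwX)
      -- assemble the three subcases
      by_cases hbx : ∃ u : Fin m × Σ i : Fin k, Fin (n i), u.1 = c ∧ H u ≠ H x ∧ u.2.1 = x.2.1
      · by_cases hby : ∃ u : Fin m × Σ i : Fin k, Fin (n i), u.1 = c ∧ H u ≠ H x ∧ u.2.1 = y.2.1
        · -- subcase (b): both doles have outside vertices; part H x is private, directly
          obtain ⟨a1, ha1c, ha1H, ha1d⟩ := hbx
          obtain ⟨a2, ha2c, ha2H, ha2d⟩ := hby
          have hAa2x : A a2 = A x := by
            refine adjA a2 x (ha2c.trans hxc.symm) ?_ ha2H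
            rw [ha2d]; exact Ne.symm hdxy
          have hAa1y : A a1 = A y := by
            refine adjA a1 y (ha1c.trans hyc.symm) ?_ (fun h => ha1H (h.trans hHxy.symm))
            rw [ha1d]; exact hdxy
          refine ⟨H x, ⟨x, hxc, rfl⟩, ?_⟩
          intro w hwc hHw
          have hw1 : A w ≠ A y := by
            have := crossH w a1 (fun h => hwc (h.trans ha1c))
              (fun h => ha1H (h.symm.trans hHw))
            rw [hAa1y] at this; exact this
          have hw2 : A w ≠ A x := by
            have := crossH w a2 (fun h => hwc (h.trans ha2c))
              (fun h => ha2H (h.symm.trans hHw))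
            rw [hAa2x] at this; exact this
          have hJx : J x = J w := by
            rcases crosscover x w (by rw [hxc]; exact Ne.symm hwc) hHw.symm with h | h
            · exact absurd h.symm hw2
            · exact h
          have hJy : J y = J w := by
            rcases crosscover y w (by rw [hyc]; exact Ne.symm hwc)
              (hHxy.symm.trans hHw.symm) with h | h
            · exact absurd h.symm hw1
            · exact h
          exact (adjH x y (hxc.trans hyc.symm) hdxy hHxy).2 (hJx.trans hJy.symm)
        · -- subcase (a): all outside vertices in dole of x
          push_neg at hby
          have houts : ∀ u : Fin m × Σ i : Fin k, Fin (n i), u.1 = c → H u ≠ H x →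
              u.2.1 = x.2.1 := fun u h1 h2 => (fx u h1 h2).resolve_right (hby u h1 h2)
          exact core x y hxc hyc hHxy hdxy houts ⟨u0, hu0c, hu0H⟩
      · -- symmetric subcase: all outside vertices in dole of y
        push_neg at hbx
        have houts : ∀ u : Fin m × Σ i : Fin k, Fin (n i), u.1 = c → H u ≠ H y →
            u.2.1 = y.2.1 := by
          intro u h1 h2
          have h2' : H u ≠ H x := fun h => h2 (h.trans hHxy)
          exact (fx u h1 h2').resolve_left (hbx u h1 h2')
        have hout0' : ∃ u : Fin m × Σ i : Fin k, Fin (n i), u.1 = c ∧ H u ≠ H y :=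
          ⟨u0, hu0c, fun h => hu0H (h.trans hHxy.symm)⟩
        exact core y x hyc hxc hHxy.symm (Ne.symm hdxy) houts hout0'
  -- choose private parts; they exhaust all parts
  choose P hPuse hPpriv using priv
  have hPinj : Function.Injective P := by
    intro c c' h
    obtain ⟨u, huc, huP⟩ := hPuse c'
    by_contra hne
    exact hPpriv c u (by rw [huc]; exact Ne.symm hne) (huP.trans h.symm)
  have hPsurj : Function.Surjective P := Finite.surjective_of_injective hPinj
  have hHP : ∀ u : Fin m × Σ i : Fin k, Fin (n i), H u = P u.1 := by
    intro u
    obtain ⟨c'', hc''⟩ := hPsurj (H u)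
    by_cases h : u.1 = c''
    · rw [h, hc'']
    · exact absurd hc''.symm (hPpriv c'' u h)
  -- A is injective on all vertices
  have hAinjG : Function.Injective A := by
    intro u v hA
    by_cases hc : u.1 = v.1
    · have hflat' : ∀ a b : Fin m × Σ i : Fin k, Fin (n i), a.1 = u.1 → b.1 = u.1 →
          H a = H b := by
        intro a b ha hb
        rw [hHP a, hHP b, ha, hb]
      exact (flatlem u.1 hflat').2.1 u v rfl hc.symm hA
    · exact absurd hA (crossH u v hc (by
        rw [hHP u, hHP v]; exact fun h => hc (hPinj h)))
  -- pigeonhole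
  have hcard := Fintype.card_le_of_injective A hAinjG
  simp [Fintype.card_sigma] at hcard
  omega

/-- with `k ≥ 2` and `n_k > 1`, the almost multipartite graph
`G^m_{ℓ−1,k}` (`ℓ = m(n₁+…+n_k)`) contains no induced subgraph isomorphic to
`mK_{n₁,…,n_k}`. -/
theorem almostMultipartite_not_contains (k m : ℕ) (hk : 2 ≤ k) (hm : 1 ≤ m)
    (n : Fin k → ℕ) (hpos : ∀ i, 0 < n i) (hmono : Monotone n)
    (hnk : 1 < n ⟨k - 1, by omega⟩) :
    ¬Nonempty ((manyCopies m (SimpleGraph.completeMultipartiteGraph fun i => Fin (n i))) ↪g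
        almostMultipartite (m * ∑ i, n i - 1) k m) := by
  rintro ⟨f⟩
  have hsum : 0 < ∑ i, n i := by
    refine Finset.sum_pos (fun i _ => hpos i) ⟨⟨0, by omega⟩, Finset.mem_univ _⟩
  have hadj : ∀ u v, ((manyCopies m
      (SimpleGraph.completeMultipartiteGraph fun i => Fin (n i))).Adj u v) ↔
      ((almostMultipartite (m * ∑ i, n i - 1) k m).Adj (f u) (f v)) :=
    fun u v => (f.map_rel_iff).symm
  have hsrc : ∀ u v : Fin m × Σ i : Fin k, Fin (n i),
      ((manyCopies m (SimpleGraph.completeMultipartiteGraph fun i => Fin (n i))).Adj u v) ↔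
      (u.1 = v.1 ∧ u.2.1 ≠ v.2.1) := by
    intro u v
    rfl
  have htgt : ∀ p q : Fin (m * ∑ i, n i - 1) × Fin k × Fin m,
      ((almostMultipartite (m * ∑ i, n i - 1) k m).Adj p q) ↔
      ((p.2.2 = q.2.2 ∧ p.1 ≠ q.1 ∧ p.2.1 ≠ q.2.1) ∨ (p.1 = q.1 ∧ p.2.2 ≠ q.2.2)) := by
    intro p q
    rfl
  refine abs_main k m (m * ∑ i, n i - 1) hk n hpos hnk
    (Nat.sub_lt (by positivity) one_pos)
    (fun u => (f u).1) (fun u => (f u).2.1) (fun u => (f u).2.2) ?_ ?_ ?_ ?_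
  · intro u v hA hJ hH
    exact f.injective (Prod.ext hA (Prod.ext hJ hH))
  · intro u v h1 h2
    have := (htgt (f u) (f v)).mp ((hadj u v).mp ((hsrc u v).mpr ⟨h1, h2⟩))
    exact this
  · intro u v hne hor hH
    have hnadj : ¬ ((manyCopies m
        (SimpleGraph.completeMultipartiteGraph fun i => Fin (n i))).Adj u v) := by
      rw [hsrc u v]
      rintro ⟨h1, h2⟩
      rcases hor with h | h
      · exact h h1
      · exact h2 h
    have := fun hh => hnadj ((hadj u v).mpr ((htgt (f u) (f v)).mpr hh))
    by_contra hcon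
    push_neg at hcon
    exact this (Or.inl ⟨hH, hcon.1, hcon.2⟩)
  · intro u v hne hor hA
    have hnadj : ¬ ((manyCopies m
        (SimpleGraph.completeMultipartiteGraph fun i => Fin (n i))).Adj u v) := by
      rw [hsrc u v]
      rintro ⟨h1, h2⟩
      rcases hor with h | h
      · exact h h1
      · exact h2 h
    have hno := fun hh => hnadj ((hadj u v).mpr ((htgt (f u) (f v)).mpr hh))
    by_contra hcon
    exact hno (Or.inr ⟨hA, hcon⟩)
end

section
/- Let K_{2,1,1} be the diamond graph (the complete multipartite graph with parts of sizes 2, 1, 1), and let F = K_1 ⊔ K_{2,1,1}. Then the graph 2·G^1_{4,3} (two disjoint copies of the almost multipartite graph G^1_{4,3}) contains an induced subgraph isomorphic to F, while the graph 2·G^1_{3,3} does not contain an induced subgraph isomorphic to F. -/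
instance almostMultipartite.decAdj (ℓ k m : ℕ) :
    DecidableRel (almostMultipartite ℓ k m).Adj := fun p q =>
  inferInstanceAs (Decidable ((p.2.2 = q.2.2 ∧ p.1 ≠ q.1 ∧ p.2.1 ≠ q.2.1) ∨
    (p.1 = q.1 ∧ p.2.2 ≠ q.2.2)))

instance manyCopies.decAdj {α : Type*} [DecidableEq α] (m : ℕ) (A : SimpleGraph α)
    [DecidableRel A.Adj] : DecidableRel (manyCopies m A).Adj := fun p q =>
  inferInstanceAs (Decidable (p.1 = q.1 ∧ A.Adj p.2 q.2))

instance sumGraph.decAdj {α β : Type*} (G : SimpleGraph α) (H : SimpleGraph β)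
    [DecidableRel G.Adj] [DecidableRel H.Adj] : DecidableRel (G ⊕g H).Adj := fun u v =>
  match u, v with
  | .inl a, .inl b => inferInstanceAs (Decidable (G.Adj a b))
  | .inr a, .inr b => inferInstanceAs (Decidable (H.Adj a b))
  | .inl _, .inr _ => inferInstanceAs (Decidable (false = true))
  | .inr _, .inl _ => inferInstanceAs (Decidable (false = true))

instance cmpg.decAdj {ι : Type*} [DecidableEq ι] (V : ι → Type*) :
    DecidableRel (SimpleGraph.completeMultipartiteGraph V).Adj := fun v w =>
  inferInstanceAs (Decidable (v.1 ≠ w.1))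

/-- Vertices of `F = K₁ ⊔ K_{2,1,1}`. -/
abbrev Fvert := Fin 1 ⊕ Σ i : Fin 3, Fin (![2, 1, 1] i)

def va1 : Fvert := .inr ⟨0, ⟨0, by decide⟩⟩
def va2 : Fvert := .inr ⟨0, ⟨1, by decide⟩⟩
def vb : Fvert := .inr ⟨1, ⟨0, by decide⟩⟩
def vc : Fvert := .inr ⟨2, ⟨0, by decide⟩⟩

/-- The explicit embedding for the positive part. -/
def theMap : Fvert → Fin 2 × Fin 4 × Fin 3 × Fin 1
  | .inl _ => (1, 0, 0, 0)
  | .inr ⟨⟨0, _⟩, j⟩ => (0, if j.val = 0 then 0 else 1, 0, 0)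
  | .inr ⟨⟨1, _⟩, _⟩ => (0, 2, 1, 0)
  | .inr ⟨⟨_ + 2, _⟩, _⟩ => (0, 3, 2, 0)

/-- with `F = K₁ ⊔ K_{2,1,1}` (a vertex plus the diamond graph),
the graph `2·G¹_{4,3}` contains an induced subgraph isomorphic to `F`, while
`2·G¹_{3,3}` does not. -/
theorem diamond_plus_vertex_induced :
    Nonempty (((⊥ : SimpleGraph (Fin 1)) ⊕g
        SimpleGraph.completeMultipartiteGraph fun i : Fin 3 => Fin (![2, 1, 1] i)) ↪g
        manyCopies 2 (almostMultipartite 4 3 1)) ∧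
    ¬Nonempty (((⊥ : SimpleGraph (Fin 1)) ⊕g
        SimpleGraph.completeMultipartiteGraph fun i : Fin 3 => Fin (![2, 1, 1] i)) ↪g
        manyCopies 2 (almostMultipartite 3 3 1)) := by
  constructor
  · exact ⟨⟨⟨theMap, by decide⟩, by intro a b; revert a b; decide⟩⟩
  · rintro ⟨f⟩
    set F := ((⊥ : SimpleGraph (Fin 1)) ⊕g
        SimpleGraph.completeMultipartiteGraph fun i : Fin 3 => Fin (![2, 1, 1] i))
    have key : ∀ x1 x2 y z : Fin 3 × Fin 3 × Fin 1, ¬(x1 ≠ x2 ∧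
        ¬(almostMultipartite 3 3 1).Adj x1 x2 ∧
        (almostMultipartite 3 3 1).Adj x1 y ∧ (almostMultipartite 3 3 1).Adj x2 y ∧
        (almostMultipartite 3 3 1).Adj x1 z ∧ (almostMultipartite 3 3 1).Adj x2 z ∧
        (almostMultipartite 3 3 1).Adj y z) := by decide
    set a1 := f va1 with ha1
    set a2 := f va2 with ha2
    set b := f vb with hb
    set c := f vc with hc
    have h12 : ¬(manyCopies 2 (almostMultipartite 3 3 1)).Adj a1 a2 := fun h =>
      (by decide : ¬ F.Adj va1 va2) (f.map_rel_iff.1 h)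
    have h1b : (manyCopies 2 (almostMultipartite 3 3 1)).Adj a1 b :=
      f.map_rel_iff.2 (by decide : F.Adj va1 vb)
    have h2b : (manyCopies 2 (almostMultipartite 3 3 1)).Adj a2 b :=
      f.map_rel_iff.2 (by decide : F.Adj va2 vb)
    have h1c : (manyCopies 2 (almostMultipartite 3 3 1)).Adj a1 c :=
      f.map_rel_iff.2 (by decide : F.Adj va1 vc)
    have h2c : (manyCopies 2 (almostMultipartite 3 3 1)).Adj a2 c :=
      f.map_rel_iff.2 (by decide : F.Adj va2 vc)
    have hbc : (manyCopies 2 (almostMultipartite 3 3 1)).Adj b c :=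
      f.map_rel_iff.2 (by decide : F.Adj vb vc)
    have hne : a1 ≠ a2 := fun h => (by decide : va1 ≠ va2) (f.injective h)
    obtain ⟨e1b, A1b⟩ := h1b
    obtain ⟨e2b, A2b⟩ := h2b
    obtain ⟨e1c, A1c⟩ := h1c
    obtain ⟨e2c, A2c⟩ := h2c
    obtain ⟨ebc, Abc⟩ := hbc
    have e12 : a1.1 = a2.1 := e1b.trans e2b.symm
    have hne2 : a1.2 ≠ a2.2 := fun h => hne (Prod.ext e12 h)
    have hnadj2 : ¬(almostMultipartite 3 3 1).Adj a1.2 a2.2 := fun h => h12 ⟨e12, h⟩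
    exact key a1.2 a2.2 b.2 c.2 ⟨hne2, hnadj2, A1b, A2b, A1c, A2c, Abc⟩
end

section
/- For every first-order sentence φ in the language of graphs of quantifier depth at most 3, the graph 2·G^1_{4,3} (two disjoint copies of the almost multipartite graph G^1_{4,3}) satisfies φ if and only if the graph 2·G^1_{3,3} satisfies φ. -/
open FirstOrder

/-- Quantifier depth of a first-order (bounded) formula: atomic formulas have
depth 0, binary connectives take the max, and a quantifier adds 1. -/
def FirstOrder.Language.BoundedFormula.qdepth {L : Language} {α : Type*} :
    {n : ℕ} → L.BoundedFormula α n → ℕ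
  | _, .falsum => 0
  | _, .equal _ _ => 0
  | _, .rel _ _ => 0
  | _, .imp f g => max f.qdepth g.qdepth
  | _, .all f => f.qdepth + 1

namespace DAMEE

abbrev VA := Fin 2 × (Fin 4 × Fin 3 × Fin 1)
abbrev VB := Fin 2 × (Fin 3 × Fin 3 × Fin 1)

def GA : SimpleGraph VA := manyCopies 2 (almostMultipartite 4 3 1)
def GB : SimpleGraph VB := manyCopies 2 (almostMultipartite 3 3 1)

instance decA : DecidableRel GA.Adj := fun p q =>
  decidable_of_iff (p.1 = q.1 ∧ ((p.2.2.2 = q.2.2.2 ∧ p.2.1 ≠ q.2.1 ∧ p.2.2.1 ≠ q.2.2.1) ∨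
    (p.2.1 = q.2.1 ∧ p.2.2.2 ≠ q.2.2.2))) Iff.rfl

instance decB : DecidableRel GB.Adj := fun p q =>
  decidable_of_iff (p.1 = q.1 ∧ ((p.2.2.2 = q.2.2.2 ∧ p.2.1 ≠ q.2.1 ∧ p.2.2.1 ≠ q.2.2.1) ∨
    (p.2.1 = q.2.1 ∧ p.2.2.2 ≠ q.2.2.2))) Iff.rfl

/-- The type of a pair of vertices: 0 = equal, 1 = adjacent, 2 = distinct nonadjacent in the
same copy, 3 = different copies. -/
def tA (p q : VA) : Fin 4 :=
  if p = q then 0 else if GA.Adj p q then 1 else if p.1 = q.1 then 2 else 3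
def tB (p q : VB) : Fin 4 :=
  if p = q then 0 else if GB.Adj p q then 1 else if p.1 = q.1 then 2 else 3

/-- Which triples of pair-types are realizable (in both graphs). -/
def P (r12 r13 r23 : Fin 4) : Bool :=
  if r13 = 0 then r23 == r12
  else if r23 = 0 then r13 == r12
  else if r12 = 0 then r13 == r23
  else if r12 = 3 then (r13 == 3) != (r23 == 3)
  else (r13 == 3) == (r23 == 3)

set_option maxRecDepth 10000 in
lemma tA_symm : ∀ p q : VA, tA p q = tA q p := by decide
set_option maxRecDepth 10000 in
lemma tB_symm : ∀ p q : VB, tB p q = tB q p := by decide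

set_option maxRecDepth 100000 in
lemma PA_complete : ∀ x1 x2 x3 : VA, P (tA x1 x2) (tA x1 x3) (tA x2 x3) = true := by decide
set_option maxRecDepth 100000 in
lemma PB_complete : ∀ y1 y2 y3 : VB, P (tB y1 y2) (tB y1 y3) (tB y2 y3) = true := by decide

set_option maxRecDepth 100000 in
set_option maxHeartbeats 4000000 in
lemma PA_realize : ∀ (x1 x2 : VA) (r13 r23 : Fin 4), P (tA x1 x2) r13 r23 = true →
    ∃ x3, tA x1 x3 = r13 ∧ tA x2 x3 = r23 := by decide
set_option maxRecDepth 100000 in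
set_option maxHeartbeats 4000000 in
lemma PB_realize : ∀ (y1 y2 : VB) (r13 r23 : Fin 4), P (tB y1 y2) r13 r23 = true →
    ∃ y3, tB y1 y3 = r13 ∧ tB y2 y3 = r23 := by decide

set_option maxRecDepth 100000 in
lemma one_forth : ∀ (y1 : VB) (r : Fin 4), ∃ b : VB, tB y1 b = r := by decide
set_option maxRecDepth 100000 in
lemma one_back : ∀ (x1 : VA) (r : Fin 4), ∃ b : VA, tA x1 b = r := by decide

lemma tA_zero (p q : VA) : tA p q = 0 ↔ p = q := by
  unfold tA; split_ifs with h1 h2 h3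
  · exact iff_of_true rfl h1
  · exact iff_of_false (by decide) h1
  · exact iff_of_false (by decide) h1
  · exact iff_of_false (by decide) h1

lemma tB_zero (p q : VB) : tB p q = 0 ↔ p = q := by
  unfold tB; split_ifs with h1 h2 h3
  · exact iff_of_true rfl h1
  · exact iff_of_false (by decide) h1
  · exact iff_of_false (by decide) h1
  · exact iff_of_false (by decide) h1

lemma tA_one (p q : VA) : tA p q = 1 ↔ GA.Adj p q := by
  unfold tA; split_ifs with h1 h2 h3
  · exact iff_of_false (by decide) (fun h => GA.loopless.irrefl q (h1 ▸ h))
  · exact iff_of_true rfl h2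
  · exact iff_of_false (by decide) h2
  · exact iff_of_false (by decide) h2

lemma tB_one (p q : VB) : tB p q = 1 ↔ GB.Adj p q := by
  unfold tB; split_ifs with h1 h2 h3
  · exact iff_of_false (by decide) (fun h => GB.loopless.irrefl q (h1 ▸ h))
  · exact iff_of_true rfl h2
  · exact iff_of_false (by decide) h2
  · exact iff_of_false (by decide) h2

lemma tA_self (p : VA) : tA p p = 0 := (tA_zero p p).mpr rfl
lemma tB_self (p : VB) : tB p p = 0 := (tB_zero p p).mpr rfl

/-- The back-and-forth invariant: the tuples have the same pairwise types. -/
def Rel (n : ℕ) (xs : Fin n → VA) (ys : Fin n → VB) : Prop :=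
  ∀ i j, tA (xs i) (xs j) = tB (ys i) (ys j)

lemma rel_snoc {n : ℕ} {xs : Fin n → VA} {ys : Fin n → VB} (h : Rel n xs ys) {a : VA} {b : VB}
    (hab : ∀ i, tA (xs i) a = tB (ys i) b) :
    Rel (n + 1) (Fin.snoc xs a) (Fin.snoc ys b) := by
  intro i j
  induction i using Fin.lastCases with
  | last =>
    induction j using Fin.lastCases with
    | last => simp [Fin.snoc_last, tA_self, tB_self]
    | cast j =>
      simp only [Fin.snoc_last, Fin.snoc_castSucc]
      rw [tA_symm, tB_symm]; exact hab j
  | cast i =>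
    induction j using Fin.lastCases with
    | last => simp only [Fin.snoc_last, Fin.snoc_castSucc]; exact hab i
    | cast j => simp only [Fin.snoc_castSucc]; exact h i j

lemma forth : ∀ {n : ℕ}, n ≤ 2 → ∀ {xs : Fin n → VA} {ys : Fin n → VB}, Rel n xs ys →
    ∀ a : VA, ∃ b : VB, Rel (n + 1) (Fin.snoc xs a) (Fin.snoc ys b)
  | 0, _, xs, ys, h, a => ⟨default, rel_snoc h (fun i => i.elim0)⟩
  | 1, _, xs, ys, h, a => by
    obtain ⟨b, hb⟩ := one_forth (ys 0) (tA (xs 0) a)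
    exact ⟨b, rel_snoc h (fun i => by fin_cases i; exact hb.symm)⟩
  | 2, _, xs, ys, h, a => by
    have hP := PA_complete (xs 0) (xs 1) a
    rw [h 0 1] at hP
    obtain ⟨b, hb1, hb2⟩ := PB_realize (ys 0) (ys 1) _ _ hP
    exact ⟨b, rel_snoc h (fun i => by fin_cases i; exacts [hb1.symm, hb2.symm])⟩

lemma back : ∀ {n : ℕ}, n ≤ 2 → ∀ {xs : Fin n → VA} {ys : Fin n → VB}, Rel n xs ys →
    ∀ b : VB, ∃ a : VA, Rel (n + 1) (Fin.snoc xs a) (Fin.snoc ys b)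
  | 0, _, xs, ys, h, b => ⟨default, rel_snoc h (fun i => i.elim0)⟩
  | 1, _, xs, ys, h, b => by
    obtain ⟨a, ha⟩ := one_back (xs 0) (tB (ys 0) b)
    exact ⟨a, rel_snoc h (fun i => by fin_cases i; exact ha)⟩
  | 2, _, xs, ys, h, b => by
    have hP := PB_complete (ys 0) (ys 1) b
    rw [← h 0 1] at hP
    obtain ⟨a, ha1, ha2⟩ := PA_realize (xs 0) (xs 1) _ _ hP
    exact ⟨a, rel_snoc h (fun i => by fin_cases i; exacts [ha1, ha2])⟩

lemma term_eq_var {γ : Type*} (t : Language.graph.Term γ) : ∃ v, t = Language.Term.var v := by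
  cases t with
  | var v => exact ⟨v, rfl⟩
  | func f ts => exact Empty.elim f

theorem main : ∀ {n : ℕ} (φ : Language.graph.BoundedFormula Empty n)
    (v : Empty → VA) (w : Empty → VB) (xs : Fin n → VA) (ys : Fin n → VB),
    Rel n xs ys → φ.qdepth + n ≤ 3 →
    ((letI := GA.structure; φ.Realize v xs) ↔ (letI := GB.structure; φ.Realize w ys)) := by
  intro n φ
  induction φ with
  | falsum => intro v w xs ys h hd; exact Iff.rfl
  | equal t1 t2 =>
    intro v w xs ys h hd
    obtain ⟨v1, rfl⟩ := term_eq_var t1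
    obtain ⟨v2, rfl⟩ := term_eq_var t2
    cases v1 with
    | inl e => exact e.elim
    | inr i =>
      cases v2 with
      | inl e => exact e.elim
      | inr j =>
        show xs i = xs j ↔ ys i = ys j
        constructor
        · intro hh
          have hij := h i j
          rw [(tA_zero _ _).mpr hh] at hij
          exact (tB_zero _ _).mp hij.symm
        · intro hh
          have hij := h i j
          rw [(tB_zero _ _).mpr hh] at hij
          exact (tA_zero _ _).mp hij
  | rel R ts =>
    intro v w xs ys h hd
    cases R with
    | adj =>
      letI := GA.structure
      letI := GB.structure
      obtain ⟨v1, h1⟩ := term_eq_var (ts 0)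
      obtain ⟨v2, h2⟩ := term_eq_var (ts 1)
      show GA.Adj ((ts 0).realize (Sum.elim v xs)) ((ts 1).realize (Sum.elim v xs)) ↔
        GB.Adj ((ts 0).realize (Sum.elim w ys)) ((ts 1).realize (Sum.elim w ys))
      rw [h1, h2]
      cases v1 with
      | inl e => exact e.elim
      | inr i =>
        cases v2 with
        | inl e => exact e.elim
        | inr j =>
          show GA.Adj (xs i) (xs j) ↔ GB.Adj (ys i) (ys j)
          constructor
          · intro hh
            have hij := h i j
            rw [(tA_one _ _).mpr hh] at hij
            exact (tB_one _ _).mp hij.symm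
          · intro hh
            have hij := h i j
            rw [(tB_one _ _).mpr hh] at hij
            exact (tA_one _ _).mp hij
  | imp f g ihf ihg =>
    intro v w xs ys h hd
    replace hd : max f.qdepth g.qdepth + _ ≤ 3 := hd
    exact imp_congr (ihf v w xs ys h (le_trans (Nat.add_le_add_right (le_max_left _ _) _) hd))
      (ihg v w xs ys h (le_trans (Nat.add_le_add_right (le_max_right _ _) _) hd))
  | all f ih =>
    intro v w xs ys h hd
    replace hd : f.qdepth + 1 + _ ≤ 3 := hd
    constructor
    · intro H b
      obtain ⟨a, ha⟩ := back (by omega) h b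
      exact (ih v w _ _ ha (by omega)).mp (H a)
    · intro H a
      obtain ⟨b, hb⟩ := forth (by omega) h a
      exact (ih v w _ _ hb (by omega)).mpr (H b)

end DAMEE

open FirstOrder in
/-- the graphs `2·G¹_{4,3}` and `2·G¹_{3,3}` satisfy exactly the same
first-order sentences of quantifier depth at most 3. -/
theorem doubled_almost_multipartite_elementary_equiv
    (φ : Language.graph.Sentence) (hφ : φ.qdepth ≤ 3) :
    (letI := (manyCopies 2 (almostMultipartite 4 3 1)).structure
     φ.Realize (Fin 2 × (Fin 4 × Fin 3 × Fin 1))) ↔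
    (letI := (manyCopies 2 (almostMultipartite 3 3 1)).structure
     φ.Realize (Fin 2 × (Fin 3 × Fin 3 × Fin 1))) := by
  exact DAMEE.main φ _ _ _ _ (fun i => i.elim0) (by simpa using hφ)
end
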